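/- For every integer k and every natural number i, the element (x+y)^i/(xy) + x^i/(−y(x+y)) + (−y)^i/(−x(x+y)) + (2kx−y)^i/(−x((2k+1)x−y)) + (−(2k+2)x+y)^i/(x((2k+1)x−y)) of the fraction field ℝ(x,y) lies in (the canonical image of) the polynomial ring ℝ[x,y]. (This expresses that the fiber integral π_*(c₁^i) of the toric manifold CP²#2(CP²-bar), computed by the localization formula, is an honest, non-localized, cohomology class of BT²; for i = 0 and i = 1 the sum is 0, for i = 2 it is 7, and for i = 3 it is −(8k²+8k+4)x + (8k+6)y.) -/

import Mathlib

open MvPolynomial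

noncomputable section

/-- The polynomial ring ℝ[x,y]. -/
abbrev P2 : Type := MvPolynomial (Fin 2) ℝ

/-- The fraction field ℝ(x,y). -/
abbrev K2 : Type := FractionRing P2

/-- x as a polynomial. -/
def px : P2 := X 0

/-- y as a polynomial. -/
def py : P2 := X 1

/-- x in the fraction field. -/
def fx : K2 := algebraMap P2 K2 px

/-- y in the fraction field. -/
def fy : K2 := algebraMap P2 K2 py

lemma dvd_sub_aeval (d : P2) (a : Fin 2 → P2) (h : ∀ j, d ∣ X j - a j) (p : P2) :
    d ∣ p - (aeval a) p := by
  induction p using MvPolynomial.induction_on with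
  | C r => simp
  | add p q hp hq =>
      have := dvd_add hp hq
      simpa [map_add, sub_add_sub_comm] using this
  | mul_X p j hp =>
      have key : p * X j - (aeval a) (p * X j)
          = (p - (aeval a) p) * X j + (aeval a) p * (X j - a j) := by
        simp only [map_mul, aeval_X]; ring
      rw [key]
      exact dvd_add (hp.mul_right _) ((h j).mul_left _)

lemma field_calc {F : Type*} [Field F] (A B C U V G S Q : F)
    (hA : A ≠ 0) (hB : B ≠ 0) (hAB : A + B ≠ 0) (hC : C ≠ 0) (i : ℕ)
    (hg : B * G = (A + B) ^ (i + 1) - A ^ (i + 1))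
    (hs : 2 * C * S = U ^ i - V ^ i)
    (hN : A * (A + B) * Q = G - (-B) ^ i - 2 * (A + B) * S) :
    Q = (A + B) ^ i / (A * B) + A ^ i / (-(B * (A + B))) + (-B) ^ i / (-(A * (A + B)))
      + U ^ i / (-(A * C)) + V ^ i / (A * C) := by
  have h1 : A * B ≠ 0 := mul_ne_zero hA hB
  have h2 : -(B * (A + B)) ≠ 0 := neg_ne_zero.mpr (mul_ne_zero hB hAB)
  have h3 : -(A * (A + B)) ≠ 0 := neg_ne_zero.mpr (mul_ne_zero hA hAB)
  have h4 : -(A * C) ≠ 0 := neg_ne_zero.mpr (mul_ne_zero hA hC)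
  have h5 : A * C ≠ 0 := mul_ne_zero hA hC
  rw [div_add_div _ _ h1 h2, div_add_div _ _ (mul_ne_zero h1 h2) h3,
    div_add_div _ _ (mul_ne_zero (mul_ne_zero h1 h2) h3) h4,
    div_add_div _ _ (mul_ne_zero (mul_ne_zero (mul_ne_zero h1 h2) h3) h4) h5,
    eq_div_iff (mul_ne_zero (mul_ne_zero (mul_ne_zero (mul_ne_zero h1 h2) h3) h4) h5)]
  linear_combination (-(A^3*B^2*(A+B)*C^2)) * hN + (-(A^3*B*(A+B)*C^2)) * hg
    + (A^3*B^2*(A+B)^2*C) * hs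

set_option maxHeartbeats 1000000 in
/-- the localization expression for π_*(c₁^i) of CP²#2(CP²-bar)
lies in the canonical image of ℝ[x,y] in ℝ(x,y). -/
theorem stmt_16 (k : ℤ) (i : ℕ) :
    ∃ p : P2, algebraMap P2 K2 p =
      (fx + fy) ^ i / (fx * fy)
        + fx ^ i / (-(fy * (fx + fy)))
        + (-fy) ^ i / (-(fx * (fx + fy)))
        + (2 * (k : K2) * fx - fy) ^ i
            / (-(fx * ((2 * (k : K2) + 1) * fx - fy)))
        + (-(2 * (k : K2) + 2) * fx + fy) ^ i
            / (fx * ((2 * (k : K2) + 1) * fx - fy)) := by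
  classical
  -- polynomial versions of the weights
  set u : P2 := 2 * (k : P2) * px - py with hu
  set v : P2 := -(2 * (k : P2) + 2) * px + py with hv
  set c : P2 := (2 * (k : P2) + 1) * px - py with hc
  -- geometric sum quotients
  obtain ⟨g, hg⟩ : py ∣ (px + py) ^ (i + 1) - px ^ (i + 1) := by
    have := sub_dvd_pow_sub_pow (px + py) px (i + 1)
    simpa using this
  obtain ⟨σ, hσ⟩ : 2 * c ∣ u ^ i - v ^ i := by
    have h2 : u - v = 2 * c := by rw [hu, hv, hc]; ring
    have := sub_dvd_pow_sub_pow u v i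
    rwa [h2] at this
  set N : P2 := g - (-py) ^ i - 2 * (px + py) * σ with hN
  -- substitution x ↦ 0
  set e0 : P2 →ₐ[ℝ] P2 := aeval ![0, X 1] with he0
  have e0x : e0 px = 0 := by simp [he0, px]
  have e0y : e0 py = py := by simp [he0, py]
  have hy0 : (py : P2) ≠ 0 := by
    simp only [py]; exact X_ne_zero (R := ℝ) (1 : Fin 2)
  have hx0 : (px : P2) ≠ 0 := by
    simp only [px]; exact X_ne_zero (R := ℝ) (0 : Fin 2)
  have e0g : py * e0 g = py ^ (i + 1) := by
    have := congrArg e0 hg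
    simp only [map_sub, map_pow, map_mul, map_add, e0x, e0y, zero_add] at this
    rw [← this]; rw [zero_pow (Nat.succ_ne_zero i)]; ring
  have e0u : e0 u = -py := by
    simp only [hu, map_sub, map_mul, e0x, e0y, mul_zero, zero_sub]
  have e0v : e0 v = py := by
    simp only [hv, map_add, map_mul, map_neg, e0x, e0y, mul_zero, neg_zero, zero_add]
  have e0c : e0 c = -py := by
    simp only [hc, map_sub, map_mul, e0x, e0y, mul_zero, zero_sub]
  have e0σ : 2 * (-py) * e0 σ = (-py) ^ i - py ^ i := by
    have := congrArg e0 hσ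
    simp only [map_sub, map_pow, map_mul, e0u, e0v, e0c, map_ofNat] at this
    exact this.symm
  have e0N : e0 N = 0 := by
    have h1 : py * e0 N = 0 := by
      have expand : e0 N = e0 g - (-py) ^ i - 2 * (0 + py) * e0 σ := by
        simp only [hN, map_sub, map_mul, map_add, map_pow, map_neg, e0x, e0y, map_ofNat]
      rw [expand]
      linear_combination e0g + py * e0σ
    rcases mul_eq_zero.mp h1 with h | h
    · exact absurd h hy0
    · exact h
  -- substitution y ↦ -x
  set e1 : P2 →ₐ[ℝ] P2 := aeval ![X 0, -X 0] with he1
  have e1x : e1 px = px := by simp [he1, px]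
  have e1y : e1 py = -px := by simp [he1, py, px]
  have e1g : (-px) * e1 g = -px ^ (i + 1) := by
    have := congrArg e1 hg
    simp only [map_sub, map_pow, map_mul, map_add, e1x, e1y, add_neg_cancel] at this
    rw [← this]; rw [zero_pow (Nat.succ_ne_zero i)]; ring
  have e1N : e1 N = 0 := by
    have expand : e1 N = e1 g - px ^ i - 2 * (px + -px) * e1 σ := by
      simp only [hN, map_sub, map_mul, map_add, map_pow, map_neg, e1x, e1y, map_ofNat, neg_neg]
    have h1 : px * e1 N = 0 := by
      rw [expand]
      linear_combination -e1g
    rcases mul_eq_zero.mp h1 with h | h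
    · exact absurd h hx0
    · exact h
  -- x ∣ N
  have hxN : px ∣ N := by
    have hdvd := dvd_sub_aeval px ![0, X 1] (fun j => by
      fin_cases j <;> simp [px]) N
    rw [← he0] at hdvd
    rw [e0N, sub_zero] at hdvd
    exact hdvd
  obtain ⟨M, hM⟩ := hxN
  -- (x+y) ∣ M
  have e1M : e1 M = 0 := by
    have : e1 N = e1 px * e1 M := by rw [hM, map_mul]
    rw [e1N, e1x] at this
    rcases mul_eq_zero.mp this.symm with h | h
    · exact absurd h hx0
    · exact h
  have hxyM : (px + py) ∣ M := by
    have hdvd := dvd_sub_aeval (px + py) ![X 0, -X 0] (fun j => by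
      fin_cases j
      · simp [px, py]
      · simp [px, py, sub_neg_eq_add, add_comm]) M
    rw [← he1] at hdvd
    rw [e1M, sub_zero] at hdvd
    exact hdvd
  obtain ⟨p, hp⟩ := hxyM
  refine ⟨p, ?_⟩
  -- pass to the fraction field
  have hNfact : N = px * (px + py) * p := by rw [hM, hp]; ring
  set φ := algebraMap P2 K2 with hφ
  have hinj : Function.Injective φ := IsFractionRing.injective P2 K2
  have hA : fx ≠ 0 := by
    intro h
    apply hx0; apply hinj
    rw [map_zero]; exact h
  have hB : fy ≠ 0 := by
    intro h
    apply hy0; apply hinj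
    rw [map_zero]; exact h
  have hABne : (px + py : P2) ≠ 0 := by
    intro h
    have := congrArg e0 h
    simp only [map_add, e0x, e0y, zero_add, map_zero] at this
    exact hy0 this
  have hAB : fx + fy ≠ 0 := by
    intro h
    apply hABne; apply hinj
    rw [map_zero, map_add]; exact h
  have hcne : (c : P2) ≠ 0 := by
    intro h
    have := congrArg e0 h
    rw [e0c, map_zero] at this
    exact hy0 (neg_eq_zero.mp this)
  have hkK : φ ((k : P2)) = (k : K2) := by simp [hφ]
  have hU : φ u = 2 * (k : K2) * fx - fy := by
    simp only [hu, map_sub, map_mul, map_ofNat, hkK, fx, fy, hφ, map_intCast]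
  have hV : φ v = -(2 * (k : K2) + 2) * fx + fy := by
    simp only [hv, map_add, map_mul, map_neg, map_ofNat, hkK, fx, fy, hφ, map_intCast]
  have hCK : φ c = (2 * (k : K2) + 1) * fx - fy := by
    simp only [hc, map_sub, map_add, map_mul, map_one, map_ofNat, hkK, fx, fy, hφ, map_intCast]
  have hC : φ c ≠ 0 := by
    intro h
    apply hcne; apply hinj
    rw [map_zero]; exact h
  -- field versions of the key identities
  have hgK : fy * φ g = (fx + fy) ^ (i + 1) - fx ^ (i + 1) := by
    have := congrArg φ hg
    simp only [map_sub, map_pow, map_mul, map_add] at this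
    exact this.symm
  have hσK : 2 * φ c * φ σ = (φ u) ^ i - (φ v) ^ i := by
    have := congrArg φ hσ
    simp only [map_sub, map_pow, map_mul, map_ofNat] at this
    exact this.symm
  have hNK : fx * (fx + fy) * φ p = φ g - (-fy) ^ i - 2 * (fx + fy) * φ σ := by
    have := congrArg φ hNfact
    simp only [hN, map_sub, map_mul, map_add, map_pow, map_neg, map_ofNat] at this
    exact this.symm
  rw [← hCK, ← hU, ← hV]
  exact field_calc fx fy (φ c) (φ u) (φ v) (φ g) (φ σ) (φ p) hA hB hAB hC i hgK hσK hNK
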